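/- For every positive integer q, every integer n and every integer l, one has ρ_q(n² − 4l²) = (1/q) · Σ_{c=1}^{q} e(c·n/q) · S(c,c,l²;q). -/

import Mathlib

/-- `e(x) = exp(2πix)`. -/
noncomputable def e (x : ℝ) : ℂ := Complex.exp (2 * Real.pi * Complex.I * x)

lemma e_add (x y : ℝ) : e (x + y) = e x * e y := by
  simp only [e, ← Complex.exp_add]
  push_cast; ring_nf

lemma e_int (k : ℤ) : e k = 1 := by
  simp only [e]
  rw [show (2 * (Real.pi:ℂ) * Complex.I * ((k:ℝ):ℂ)) = (k:ℤ) * (2 * Real.pi * Complex.I) by push_cast; ring]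
  exact Complex.exp_int_mul_two_pi_mul_I k

lemma e_eq_one_iff (x : ℝ) : e x = 1 ↔ ∃ k : ℤ, x = k := by
  constructor
  · intro h
    rw [e, Complex.exp_eq_one_iff] at h
    obtain ⟨n, hn⟩ := h
    refine ⟨n, ?_⟩
    have h2 : (2 * (Real.pi:ℂ) * Complex.I) ≠ 0 := by
      have := Real.pi_ne_zero
      simp [Complex.I_ne_zero, Complex.ext_iff, this]
    have h3 : ((x:ℂ)) = (n:ℂ) := by
      have : (2 * (Real.pi:ℂ) * Complex.I) * x = (2 * (Real.pi:ℂ) * Complex.I) * n := by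
        rw [hn]; ring
      exact mul_left_cancel₀ h2 this
    exact_mod_cast h3
  · rintro ⟨k, rfl⟩; exact e_int k

lemma e_nat_mul (x : ℝ) (m : ℕ) : e (m * x) = (e x) ^ m := by
  simp only [e, ← Complex.exp_nat_mul]
  push_cast; ring_nf


/-- The generalized Kloosterman sum
`S(m,n₁,n₂;q) = Σ_{a=1}^{q} Σ_{b=1}^{q} δ_q(ab − m) · e((a·n₁ + b·n₂)/q)`. -/
noncomputable def Kl (m n₁ n₂ : ℤ) (q : ℕ) : ℂ :=
  ∑ a ∈ Finset.Icc 1 q, ∑ b ∈ Finset.Icc 1 q,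
    (if (q : ℤ) ∣ ((a : ℤ) * (b : ℤ) - m) then (1 : ℂ) else 0) *
      e (((a : ℝ) * (n₁ : ℝ) + (b : ℝ) * (n₂ : ℝ)) / q)

/-- `ρ_q(n) = #{x (mod 2q) : x² ≡ n (mod 4q)}`. -/
def rho (q : ℕ) (n : ℤ) : ℕ :=
  ((Finset.range (2 * q)).filter (fun x : ℕ => ((4 * q : ℕ) : ℤ) ∣ ((x : ℤ) ^ 2 - n))).card

lemma e_congr {q : ℕ} (hq : 0 < q) {k k' : ℤ} (h : (q:ℤ) ∣ (k - k')) :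
    e ((k:ℝ) / q) = e ((k':ℝ) / q) := by
  obtain ⟨m, hm⟩ := h
  have hk : k = k' + q * m := by linarith
  have hq' : (q:ℝ) ≠ 0 := Nat.cast_ne_zero.mpr hq.ne'
  have : (k:ℝ) / q = (k':ℝ) / q + (m:ℝ) := by
    rw [hk]; push_cast; field_simp
  rw [this, e_add, e_int, mul_one]

lemma sum_e_range (q : ℕ) (hq : 0 < q) (t : ℤ) :
    ∑ b ∈ Finset.range q, e ((b:ℝ) * t / q) = if (q:ℤ) ∣ t then (q:ℂ) else 0 := by
  have hq' : (q:ℝ) ≠ 0 := Nat.cast_ne_zero.mpr hq.ne'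
  split_ifs with h
  · obtain ⟨s, rfl⟩ := h
    have h1 : ∀ b : ℕ, e ((b:ℝ) * ((q:ℝ) * (s:ℝ)) / q) = 1 := fun b => by
      rw [show ((b:ℝ) * ((q:ℝ)*(s:ℝ)) / q) = (((b:ℤ) * s : ℤ):ℝ) by push_cast; field_simp]
      exact e_int _
    simp [h1]
  · have hterm : ∀ b : ℕ, e ((b:ℝ) * t / q) = (e ((t:ℝ)/q)) ^ b := by
      intro b
      rw [← e_nat_mul]
      congr 1; field_simp
    simp only [hterm]
    have hne : e ((t:ℝ)/q) ≠ 1 := by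
      intro hone
      obtain ⟨k, hk⟩ := (e_eq_one_iff _).mp hone
      apply h
      refine ⟨k, ?_⟩
      have : (t:ℝ) = (q:ℝ) * k := by field_simp at hk; linarith
      exact_mod_cast this
    rw [geom_sum_eq hne]
    have hpow : e ((t:ℝ)/q) ^ q = 1 := by
      rw [← e_nat_mul]
      rw [show ((q:ℝ) * ((t:ℝ)/q)) = ((t:ℤ):ℝ) by field_simp]
      exact e_int t
    rw [hpow]; simp

lemma sum_Icc_eq_range {M : Type*} [AddCommMonoid M] (q : ℕ) (hq : 0 < q) (f : ℕ → M)
    (h : f q = f 0) : ∑ x ∈ Finset.Icc 1 q, f x = ∑ x ∈ Finset.range q, f x := by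
  have h1 : Finset.Icc 1 q = insert q (Finset.Ico 1 q) := by
    rw [Finset.Ico_insert_right hq]
  have h2 : Finset.range q = insert 0 (Finset.Ico 1 q) := by
    rw [Finset.range_eq_Ico, show (1:ℕ) = 0 + 1 from rfl, Finset.Ico_add_one_left_eq_Ioo,
      Finset.Ioo_insert_left hq]
  rw [h1, h2, Finset.sum_insert (by simp), Finset.sum_insert (by simp), h]

lemma stepA (q : ℕ) (hq : 0 < q) (n l : ℤ) :
    ∑ c ∈ Finset.Icc 1 q, e ((c:ℝ) * (n:ℝ) / q) * Kl (c:ℤ) (c:ℤ) (l^2) q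
      = (q:ℂ) * (((Finset.range q).filter
          (fun a : ℕ => (q:ℤ) ∣ ((a:ℤ)*n + (a:ℤ)^2 + l^2))).card : ℂ) := by
  have hq' : (q:ℝ) ≠ 0 := Nat.cast_ne_zero.mpr hq.ne'
  calc ∑ c ∈ Finset.Icc 1 q, e ((c:ℝ) * (n:ℝ) / q) * Kl (c:ℤ) (c:ℤ) (l^2) q
      = ∑ a ∈ Finset.Icc 1 q, ∑ b ∈ Finset.Icc 1 q, ∑ c ∈ Finset.Icc 1 q,
          (if (q:ℤ) ∣ ((a:ℤ)*(b:ℤ) - (c:ℤ)) then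
            e (((((c:ℤ))*n + (a:ℤ)*(c:ℤ) + (b:ℤ)*l^2 : ℤ):ℝ) / q) else 0) := by
        unfold Kl
        simp only [Finset.mul_sum]
        rw [Finset.sum_comm]
        refine Finset.sum_congr rfl fun a _ => ?_
        rw [Finset.sum_comm]
        refine Finset.sum_congr rfl fun b _ => Finset.sum_congr rfl fun c _ => ?_
        split_ifs with h
        · rw [one_mul, ← e_add]
          congr 1
          push_cast
          ring
        · rw [zero_mul, mul_zero]
    _ = ∑ a ∈ Finset.Icc 1 q, ∑ b ∈ Finset.Icc 1 q,
          e ((b:ℝ) * ((((a:ℤ)*n + (a:ℤ)^2 + l^2 : ℤ)):ℝ) / q) := by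
        refine Finset.sum_congr rfl fun a _ => Finset.sum_congr rfl fun b _ => ?_
        rw [sum_Icc_eq_range q hq _ ?hper]
        case hper =>
          simp only [Nat.cast_zero, sub_zero]
          by_cases h : (q:ℤ) ∣ ((a:ℤ)*(b:ℤ))
          · rw [if_pos (dvd_sub h (dvd_refl _)), if_pos h]
            refine e_congr hq ?_
            exact ⟨n + a, by push_cast; ring⟩
          · rw [if_neg ?hn1, if_neg h]
            case hn1 =>
              intro hc
              apply h
              have h2 := dvd_add hc (dvd_refl (q:ℤ))
              rwa [sub_add_cancel] at h2
        -- now sum over range q, collapse to single c₀ = (a*b) % q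
        have hc₀mem : (a*b) % q ∈ Finset.range q := Finset.mem_range.mpr (Nat.mod_lt _ hq)
        have hdvd₀ : (q:ℤ) ∣ ((a:ℤ)*(b:ℤ) - (((a*b) % q : ℕ):ℤ)) := by
          refine ⟨((a*b)/q : ℕ), ?_⟩
          have h0 : ((a*b : ℕ):ℤ) = ((a*b%q : ℕ):ℤ) + (q:ℤ)*((a*b/q : ℕ):ℤ) := by
            exact_mod_cast (Nat.mod_add_div (a*b) q).symm
          push_cast at h0 ⊢
          linarith
        rw [Finset.sum_eq_single_of_mem ((a*b) % q) hc₀mem ?hzero]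
        · rw [if_pos hdvd₀]
          refine Eq.trans (e_congr hq (k' := (b:ℤ) * ((a:ℤ)*n + (a:ℤ)^2 + l^2)) ?_) ?_
          · have heq : ((((a*b) % q : ℕ):ℤ)*n + (a:ℤ)*(((a*b) % q : ℕ):ℤ) + (b:ℤ)*l^2 : ℤ)
                - ((b:ℤ) * ((a:ℤ)*n + (a:ℤ)^2 + l^2)) = ((((a*b) % q : ℕ):ℤ) - (a:ℤ)*(b:ℤ)) * (n + a) := by
              push_cast; ring
            rw [heq]
            exact (dvd_sub_comm.mp hdvd₀).mul_right _
          · congr 1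
            push_cast
            ring
        case hzero =>
          intro c hc hne
          rw [if_neg]
          intro hdvd
          apply hne
          have hdd : (q:ℤ) ∣ ((c:ℤ) - (((a*b) % q : ℕ):ℤ)) := by
            have := dvd_sub hdvd₀ hdvd
            simpa using this
          have hcq := Finset.mem_range.mp hc
          have hmq := Nat.mod_lt (a*b) hq
          have : ((c:ℤ) - (((a*b) % q : ℕ):ℤ)) = 0 := by
            refine Int.eq_zero_of_abs_lt_dvd hdd ?_
            rw [abs_sub_lt_iff]
            constructor <;> [exact_mod_cast (by omega : (c:ℤ) - ((a*b)%q :ℕ) < q); skip]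
            exact_mod_cast (by omega : (((a*b)%q :ℕ):ℤ) - c < q)
          have : (c:ℤ) = (((a*b) % q : ℕ):ℤ) := by linarith
          exact_mod_cast this
    _ = ∑ a ∈ Finset.Icc 1 q, (if (q:ℤ) ∣ ((a:ℤ)*n + (a:ℤ)^2 + l^2) then (q:ℂ) else 0) := by
        refine Finset.sum_congr rfl fun a _ => ?_
        rw [sum_Icc_eq_range q hq _ ?hper2]
        case hper2 =>
          rw [show ((q:ℝ) * ((((a:ℤ)*n + (a:ℤ)^2 + l^2 : ℤ)):ℝ) / q) = ((((a:ℤ)*n + (a:ℤ)^2 + l^2 : ℤ)):ℝ) from by field_simp,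
            show ((((0:ℕ)):ℝ) * ((((a:ℤ)*n + (a:ℤ)^2 + l^2 : ℤ)):ℝ) / q) = ((0:ℤ):ℝ) from by push_cast; ring,
            e_int, e_int]
        exact sum_e_range q hq _
    _ = (q:ℂ) * (((Finset.range q).filter
          (fun a : ℕ => (q:ℤ) ∣ ((a:ℤ)*n + (a:ℤ)^2 + l^2))).card : ℂ) := by
        rw [sum_Icc_eq_range q hq _ ?hper3]
        case hper3 =>
          have hiff : ((q:ℤ) ∣ ((q:ℤ)*n + (q:ℤ)^2 + l^2)) ↔ ((q:ℤ) ∣ (((0:ℕ):ℤ)*n + ((0:ℕ):ℤ)^2 + l^2)) := by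
            simp only [Nat.cast_zero, zero_mul, ne_eq, OfNat.ofNat_ne_zero,
              not_false_eq_true, zero_pow, zero_add]
            constructor
            · intro h
              have : ((q:ℤ)*n + (q:ℤ)^2 + l^2) - (q:ℤ)*(n + q) = l^2 := by ring
              rw [← this]
              exact dvd_sub h (Dvd.intro _ rfl)
            · intro h
              have : ((q:ℤ)*n + (q:ℤ)^2 + l^2) = l^2 + (q:ℤ)*(n + q) := by ring
              rw [this]
              exact dvd_add h (Dvd.intro _ rfl)
          by_cases h : (q:ℤ) ∣ (((0:ℕ):ℤ)*n + ((0:ℕ):ℤ)^2 + l^2)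
          · rw [if_pos (hiff.mpr h), if_pos h]
          · rw [if_neg (fun hc => h (hiff.mp hc)), if_neg h]
        rw [← Finset.sum_filter, Finset.sum_const, nsmul_eq_mul]
        ring

lemma stepB (q : ℕ) (hq : 0 < q) (n l : ℤ) :
    rho q (n^2 - 4*l^2)
      = ((Finset.range q).filter
          (fun a : ℕ => (q:ℤ) ∣ ((a:ℤ)*n + (a:ℤ)^2 + l^2))).card := by
  have h2q : (0:ℤ) < 2*q := by positivity
  have h2q' : (2*(q:ℤ)) ≠ 0 := by positivity
  unfold rho
  refine (Finset.card_bij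
    (s := (Finset.range q).filter (fun a : ℕ => (q:ℤ) ∣ ((a:ℤ)*n + (a:ℤ)^2 + l^2)))
    (t := (Finset.range (2*q)).filter
      (fun x : ℕ => ((4 * q : ℕ) : ℤ) ∣ ((x : ℤ) ^ 2 - (n^2 - 4*l^2))))
    (fun a _ => ((2*(a:ℤ) + n) % (2*(q:ℤ))).toNat) ?hi ?hinj ?hsurj).symm
  case hi =>
    intro a ha
    obtain ⟨haq, hadvd⟩ := Finset.mem_filter.mp ha
    have haq' := Finset.mem_range.mp haq
    set X : ℤ := 2*(a:ℤ) + n with hX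
    set D : ℤ := X % (2*(q:ℤ)) with hD
    have hnn : 0 ≤ D := Int.emod_nonneg _ h2q'
    have hlt : D < 2*q := Int.emod_lt_of_pos _ h2q
    have hcast : (D.toNat : ℤ) = D := Int.toNat_of_nonneg hnn
    refine Finset.mem_filter.mpr ⟨Finset.mem_range.mpr ?_, ?_⟩
    · have : (D.toNat : ℤ) < ((2*q : ℕ):ℤ) := by rw [hcast]; push_cast; exact hlt
      exact_mod_cast this
    · obtain ⟨u, hu⟩ : (2*(q:ℤ)) ∣ (D - X) := ⟨-(X / (2*q)), by rw [hD, Int.emod_def]; ring⟩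
      obtain ⟨w, hw⟩ := hadvd
      refine ⟨u*(q*u + X) + w, ?_⟩
      have e1 : D^2 - X^2 = (4*q) * (u*(q*u+X)) := by
        have : D = X + 2*q*u := by linarith
        rw [this]; ring
      have e2 : X^2 - (n^2 - 4*l^2) = 4*((a:ℤ)*n + (a:ℤ)^2 + l^2) := by rw [hX]; ring
      have : (D.toNat:ℤ)^2 - (n^2 - 4*l^2) = (D^2 - X^2) + (X^2 - (n^2-4*l^2)) := by
        rw [hcast]; ring
      rw [this, e1, e2, hw]
      push_cast
      ring
  case hinj =>
    intro a₁ ha₁ a₂ ha₂ heq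
    have h1 : (2*(a₁:ℤ) + n) % (2*(q:ℤ)) = (2*(a₂:ℤ) + n) % (2*(q:ℤ)) := by
      have := congrArg (fun m : ℕ => (m:ℤ)) heq
      simpa [Int.toNat_of_nonneg (Int.emod_nonneg _ h2q')] using this
    have hdvd : (2*(q:ℤ)) ∣ ((2*(a₁:ℤ) + n) - (2*(a₂:ℤ) + n)) :=
      Int.ModEq.dvd (Int.ModEq.symm h1)
    obtain ⟨k, hk⟩ := hdvd
    have hk' : (a₁:ℤ) - a₂ = q * k := by linarith
    have hb₁ := Finset.mem_range.mp (Finset.mem_filter.mp ha₁).1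
    have hb₂ := Finset.mem_range.mp (Finset.mem_filter.mp ha₂).1
    have : (a₁:ℤ) - a₂ = 0 := by
      refine Int.eq_zero_of_abs_lt_dvd ⟨k, hk'⟩ ?_
      rw [abs_sub_lt_iff]
      constructor
      · exact_mod_cast (by omega : (a₁:ℤ) - a₂ < q)
      · exact_mod_cast (by omega : (a₂:ℤ) - a₁ < q)
    exact_mod_cast sub_eq_zero.mp this
  case hsurj =>
    intro x hx
    obtain ⟨hxq, hxdvd⟩ := Finset.mem_filter.mp hx
    have hxq' := Finset.mem_range.mp hxq
    have hxdvd' : (4*(q:ℤ)) ∣ ((x:ℤ)^2 - (n^2 - 4*l^2)) := by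
      have : ((4*q : ℕ):ℤ) = 4*(q:ℤ) := by push_cast; ring
      rwa [this] at hxdvd
    -- 2 ∣ x - n
    have h4 : (4:ℤ) ∣ ((x:ℤ) - n)*((x:ℤ) + n) := by
      have h41 : (4:ℤ) ∣ ((x:ℤ)^2 - (n^2 - 4*l^2)) :=
        dvd_trans ⟨q, rfl⟩ hxdvd'
      have : ((x:ℤ) - n)*((x:ℤ) + n) = ((x:ℤ)^2 - (n^2 - 4*l^2)) - 4*l^2 := by ring
      rw [this]
      exact dvd_sub h41 ⟨l^2, rfl⟩
    have h2 : (2:ℤ) ∣ ((x:ℤ) - n) := by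
      have h2' : (2:ℤ) ∣ ((x:ℤ) - n)*((x:ℤ) + n) := dvd_trans ⟨2, rfl⟩ h4
      rcases (Int.prime_two.dvd_mul.mp h2') with h | h
      · exact h
      · have : (x:ℤ) - n = ((x:ℤ) + n) - 2*n := by ring
        rw [this]; exact dvd_sub h ⟨n, rfl⟩
    obtain ⟨t, ht⟩ := h2
    have hxt : (x:ℤ) = n + 2*t := by linarith
    -- the preimage
    set a : ℕ := (t % q).toNat with hadef
    have hq0 : (q:ℤ) ≠ 0 := by positivity
    have hann : (0:ℤ) ≤ t % q := Int.emod_nonneg _ hq0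
    have halt : t % q < q := Int.emod_lt_of_pos _ (by exact_mod_cast hq)
    have hacast : (a:ℤ) = t % q := Int.toNat_of_nonneg hann
    have haq : a < q := by
      have : (a:ℤ) < q := by rw [hacast]; exact halt
      exact_mod_cast this
    have hat : (q:ℤ) ∣ ((a:ℤ) - t) := ⟨-(t / q), by rw [hacast, Int.emod_def]; ring⟩
    -- q ∣ t² + tn + l²
    have hqt : (q:ℤ) ∣ (t*n + t^2 + l^2) := by
      obtain ⟨w, hw⟩ := hxdvd'
      refine ⟨w, ?_⟩
      have h4e : 4*(t*n + t^2 + l^2) = 4*((q:ℤ)*w) := by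
        have : (x:ℤ)^2 - (n^2 - 4*l^2) = 4*(t*n + t^2 + l^2) := by rw [hxt]; ring
        rw [this] at hw; linarith
      linarith
    have hmem : a ∈ (Finset.range q).filter
        (fun a : ℕ => (q:ℤ) ∣ ((a:ℤ)*n + (a:ℤ)^2 + l^2)) := by
      refine Finset.mem_filter.mpr ⟨Finset.mem_range.mpr haq, ?_⟩
      have : ((a:ℤ)*n + (a:ℤ)^2 + l^2) = (t*n + t^2 + l^2) + ((a:ℤ) - t)*(n + a + t) := by ring
      rw [this]
      exact dvd_add hqt (hat.mul_right _)
    refine ⟨a, hmem, ?_⟩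
    -- (2a + n) % 2q = x
    have hcong : (2*(a:ℤ) + n) % (2*(q:ℤ)) = (x:ℤ) % (2*(q:ℤ)) := by
      have hd : (2*(q:ℤ)) ∣ ((2*(a:ℤ) + n) - (x:ℤ)) := by
        obtain ⟨m, hm⟩ := hat
        refine ⟨m, ?_⟩
        rw [hxt]
        linarith [hm]
      exact Int.ModEq.symm ((Int.modEq_iff_dvd).mpr hd)
    have hxmod : (x:ℤ) % (2*(q:ℤ)) = (x:ℤ) := by
      refine Int.emod_eq_of_lt (by positivity) ?_
      exact_mod_cast (by push_cast at hxq' ⊢; omega : (x:ℤ) < 2*(q:ℤ))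
    show ((2*(a:ℤ) + n) % (2*(q:ℤ))).toNat = x
    rw [hcong, hxmod]
    exact Int.toNat_natCast x


theorem rho_eq_kloosterman_sum (q : ℕ) (hq : 0 < q) (n l : ℤ) :
    (rho q (n ^ 2 - 4 * l ^ 2) : ℂ)
      = (1 / (q : ℂ)) * ∑ c ∈ Finset.Icc 1 q,
          e ((c : ℝ) * (n : ℝ) / q) * Kl (c : ℤ) (c : ℤ) (l ^ 2) q := by
  have hqC : (q:ℂ) ≠ 0 := Nat.cast_ne_zero.mpr hq.ne'
  rw [stepA q hq n l, show (n ^ 2 - 4 * l ^ 2) = (n^2 - 4*l^2) from rfl, stepB q hq n l]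
  field_simp
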